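/- Existence of attractive points from bounded orbits (mean convergence version): let H be a real Hilbert space, C ⊆ H nonempty, and T : C → C a further generalized hybrid mapping (constants α, β, γ, δ, ε with α + β + γ + δ ≥ 0, ε ≥ 0 and α + β > 0 or α + γ > 0). If there exists z ∈ C whose orbit {Tⁿz : n ≥ 0} is bounded, then A(T) is nonempty. Conversely, if A(T) is nonempty, then every orbit {Tⁿz : n ≥ 0}, z ∈ C, is bounded. -/

import Mathlib

set_option maxHeartbeats 1000000
open Filter Metric Set Topology Finset
open scoped RealInnerProductSpace

lemma nested_inter_nonempty {H : Type*} [NormedAddCommGroup H] [InnerProductSpace ℝ H]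
    [CompleteSpace H]
    (K : ℕ → Set H) (hne : ∀ n, (K n).Nonempty) (hcl : ∀ n, IsClosed (K n))
    (hcv : ∀ n, Convex ℝ (K n)) (hanti : ∀ n m, n ≤ m → K m ⊆ K n)
    (R : ℝ) (hbd : ∀ n, K n ⊆ Metric.closedBall 0 R) :
    (⋂ n, K n).Nonempty := by
  choose q hq hqn using fun n =>
    exists_norm_eq_iInf_of_complete_convex (hne n) ((hcl n).isComplete) (hcv n) 0
  set d : ℕ → ℝ := fun n => ‖q n‖ with hd
  have hinf : ∀ n, ∀ w ∈ K n, d n ≤ ‖w‖ := by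
    intro n w hw
    have : d n = ‖(0:H) - q n‖ := by simp [hd]
    rw [this, hqn n]
    have := ciInf_le (f := fun w : K n => ‖(0:H) - w‖)
      ⟨0, Set.forall_mem_range.2 fun _ => norm_nonneg _⟩ ⟨w, hw⟩
    simpa using this
  have hdR : ∀ n, d n ≤ R := by
    intro n
    have := hbd n (hq n)
    simpa [hd, mem_closedBall, dist_eq_norm] using this
  have hmono : Monotone d := by
    apply monotone_nat_of_le_succ
    intro n
    exact hinf n (q (n+1)) (hanti n (n+1) (Nat.le_succ n) (hq (n+1)))
  have hbdd : BddAbove (Set.range d) := ⟨R, Set.forall_mem_range.2 hdR⟩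
  set D := ⨆ n, d n with hD
  have hdD : ∀ n, d n ≤ D := fun n => le_ciSup hbdd n
  have htd : Tendsto d atTop (𝓝 D) := tendsto_atTop_ciSup hmono hbdd
  set b : ℕ → ℝ := fun N => Real.sqrt (4 * (D^2 - d N ^2)) with hb
  have key : ∀ N n m, N ≤ n → N ≤ m → dist (q n) (q m) ≤ b N := by
    intro N n m hn hm
    have hqnK : q n ∈ K N := hanti N n hn (hq n)
    have hqmK : q m ∈ K N := hanti N m hm (hq m)
    have hmid : (1/2 : ℝ) • q n + (1/2 : ℝ) • q m ∈ K N :=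
      hcv N hqnK hqmK (by norm_num) (by norm_num) (by norm_num)
    have h1 : d N ≤ ‖(1/2 : ℝ) • q n + (1/2 : ℝ) • q m‖ := hinf N _ hmid
    have h2 : ‖q n + q m‖ = 2 * ‖(1/2 : ℝ) • q n + (1/2 : ℝ) • q m‖ := by
      rw [← smul_add, norm_smul]
      simp
    have hpar := parallelogram_law_with_norm ℝ (q n) (q m)
    have hdn : ‖q n‖ = d n := rfl
    have hdm : ‖q m‖ = d m := rfl
    have hdist : dist (q n) (q m) ^ 2 ≤ 4 * (D^2 - d N ^ 2) := by
      have hnD := hdD n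
      have hmD := hdD m
      have hNn := hmono hn
      have hNm := hmono hm
      have h0 : 0 ≤ d N := norm_nonneg _
      rw [dist_eq_norm]
      nlinarith [h1, h2, hpar, norm_nonneg (q n + q m), norm_nonneg ((1/2 : ℝ) • q n + (1/2 : ℝ) • q m)]
    exact Real.le_sqrt_of_sq_le hdist
  have htb : Tendsto b atTop (𝓝 0) := by
    have h1 : Tendsto (fun N => 4 * (D^2 - d N ^2)) atTop (𝓝 (4 * (D^2 - D^2))) :=
      (tendsto_const_nhds.sub (htd.pow 2)).const_mul 4
    have h2 : Tendsto (fun N => 4 * (D^2 - d N ^2)) atTop (𝓝 0) := by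
      simpa using h1
    have := (Real.continuous_sqrt.tendsto 0).comp h2
    simp only [Function.comp_def] at this
    rwa [Real.sqrt_zero] at this
  have hcs : CauchySeq q := cauchySeq_of_le_tendsto_0 b (fun n m N hn hm => key N n m hn hm) htb
  obtain ⟨p, hp⟩ := cauchySeq_tendsto_of_complete hcs
  refine ⟨p, Set.mem_iInter.2 fun n => ?_⟩
  refine (hcl n).mem_of_tendsto hp ?_
  filter_upwards [eventually_ge_atTop n] with m hm
  exact hanti n m hm (hq m)


lemma forward_main {H : Type*} [NormedAddCommGroup H] [InnerProductSpace ℝ H]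
    [CompleteSpace H]
    (C : Set H) (T : H → H) (hT : ∀ x ∈ C, T x ∈ C)
    (α β γ δ : ℝ) (hsum : α + β + γ + δ ≥ 0) (hab : α + β > 0)
    (hfgh : ∀ x ∈ C, ∀ y ∈ C,
      α * ‖T x - T y‖ ^ 2 + β * ‖x - T y‖ ^ 2 + γ * ‖T x - y‖ ^ 2 + δ * ‖x - y‖ ^ 2 ≤ 0)
    (z : H) (hz : z ∈ C) (hbd : Bornology.IsBounded (Set.range fun n : ℕ => T^[n] z)) :
    ∃ p : H, ∀ x ∈ C, ‖T x - p‖ ≤ ‖x - p‖ := by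
  set v : ℕ → H := fun n => T^[n] z with hv
  have hvsucc : ∀ n, v (n + 1) = T (v n) := fun n => Function.iterate_succ_apply' T n z
  have hvC : ∀ n, v n ∈ C := by
    intro n; induction n with
    | zero => exact hz
    | succ n ih => rw [hvsucc]; exact hT _ ih
  obtain ⟨M, hM⟩ := isBounded_iff_forall_norm_le.1 hbd
  have hM' : ∀ n, ‖v n‖ ≤ M := fun n => hM _ ⟨n, rfl⟩
  have hM0 : 0 ≤ M := le_trans (norm_nonneg _) (hM' 0)
  set S : ℕ → H := fun n => (n : ℝ)⁻¹ • ∑ k ∈ Finset.range n, v k with hS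
  have hSnorm : ∀ n, 1 ≤ n → ‖S n‖ ≤ M := by
    intro n hn
    have h1 : ‖∑ k ∈ Finset.range n, v k‖ ≤ (n : ℝ) * M := by
      calc ‖∑ k ∈ Finset.range n, v k‖ ≤ ∑ k ∈ Finset.range n, ‖v k‖ :=
            norm_sum_le _ _
        _ ≤ ∑ _k ∈ Finset.range n, M := Finset.sum_le_sum fun k _ => hM' k
        _ = (n : ℝ) * M := by simp [mul_comm]
    have hnpos : (0 : ℝ) < n := by exact_mod_cast hn
    calc ‖S n‖ = (n : ℝ)⁻¹ * ‖∑ k ∈ Finset.range n, v k‖ := by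
          rw [hS]; simp [norm_smul, abs_of_pos (inv_pos.2 hnpos)]
      _ ≤ (n : ℝ)⁻¹ * ((n : ℝ) * M) := by
          exact mul_le_mul_of_nonneg_left h1 (le_of_lt (inv_pos.2 hnpos))
      _ = M := by field_simp
  -- the key averaged inequality
  have key : ∀ x ∈ C, ∃ E : ℝ, 0 ≤ E ∧ ∀ n : ℕ, 1 ≤ n →
      2 * (α + β) * ⟪S n - x, x - T x⟫ + (α + β) * ‖x - T x‖ ^ 2 ≤ E / n := by
    intro x hx
    set a := x - T x with ha
    set B := (M + ‖x‖) ^ 2 with hB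
    have hBnn : 0 ≤ B := sq_nonneg _
    have hvxB : ∀ k, ‖v k - x‖ ^ 2 ≤ B := by
      intro k
      have h1 : ‖v k - x‖ ≤ M + ‖x‖ :=
        le_trans (norm_sub_le _ _) (add_le_add (hM' k) le_rfl)
      have h2 : 0 ≤ ‖v k - x‖ := norm_nonneg _
      nlinarith
    have hga : ∀ k, |⟪v k - x, a⟫| ≤ (M + ‖x‖) * ‖a‖ := by
      intro k
      have h1 : ‖v k - x‖ ≤ M + ‖x‖ :=
        le_trans (norm_sub_le _ _) (add_le_add (hM' k) le_rfl)
      exact le_trans (abs_real_inner_le_norm _ _)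
        (mul_le_mul_of_nonneg_right h1 (norm_nonneg _))
    -- per-step inequality
    have step : ∀ k : ℕ,
        (α + γ) * ‖v (k+1) - x‖ ^ 2 + (β + δ) * ‖v k - x‖ ^ 2
          + 2 * α * ⟪v (k+1) - x, a⟫ + 2 * β * ⟪v k - x, a⟫
          + (α + β) * ‖a‖ ^ 2 ≤ 0 := by
      intro k
      have h0 := hfgh (v k) (hvC k) x hx
      rw [← hvsucc k] at h0
      have e1 : ‖v (k+1) - T x‖ ^ 2
          = ‖v (k+1) - x‖ ^ 2 + 2 * ⟪v (k+1) - x, a⟫ + ‖a‖ ^ 2 := by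
        have : v (k+1) - T x = (v (k+1) - x) + a := by rw [ha]; abel
        rw [this, norm_add_sq_real]
      have e2 : ‖v k - T x‖ ^ 2
          = ‖v k - x‖ ^ 2 + 2 * ⟪v k - x, a⟫ + ‖a‖ ^ 2 := by
        have : v k - T x = (v k - x) + a := by rw [ha]; abel
        rw [this, norm_add_sq_real]
      rw [e1, e2] at h0
      linarith [h0]
    -- sum over k < n
    refine ⟨|α + γ| * B + 4 * |α| * ((M + ‖x‖) * ‖a‖), by positivity, ?_⟩
    intro n hn
    have hnpos : (0 : ℝ) < n := by exact_mod_cast hn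
    set G : ℕ → ℝ := fun n => ∑ k ∈ Finset.range n, ⟪v k - x, a⟫ with hG
    set F : ℕ → ℝ := fun n => ∑ k ∈ Finset.range n, ‖v k - x‖ ^ 2 with hF
    have sumineq :
        (α + γ) * (F n + ‖v n - x‖ ^ 2 - ‖v 0 - x‖ ^ 2) + (β + δ) * F n
          + 2 * α * (G n + ⟪v n - x, a⟫ - ⟪v 0 - x, a⟫) + 2 * β * G n
          + n * ((α + β) * ‖a‖ ^ 2) ≤ 0 := by
      have hsummed := Finset.sum_le_sum (f := fun k =>
        (α + γ) * ‖v (k+1) - x‖ ^ 2 + (β + δ) * ‖v k - x‖ ^ 2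
          + 2 * α * ⟪v (k+1) - x, a⟫ + 2 * β * ⟪v k - x, a⟫
          + (α + β) * ‖a‖ ^ 2) (g := fun _ => (0:ℝ))
        (fun k (_ : k ∈ Finset.range n) => step k)
      simp only [Finset.sum_const_zero] at hsummed
      have shift : ∀ f : ℕ → ℝ, ∑ k ∈ Finset.range n, f (k+1)
          = (∑ k ∈ Finset.range n, f k) + f n - f 0 := by
        intro f
        have := Finset.sum_range_succ' f n
        have h2 := Finset.sum_range_succ f n
        linarith [this, h2]
      rw [Finset.sum_add_distrib, Finset.sum_add_distrib, Finset.sum_add_distrib,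
        Finset.sum_add_distrib, ← Finset.mul_sum, ← Finset.mul_sum, ← Finset.mul_sum,
        ← Finset.mul_sum, Finset.sum_const, Finset.card_range,
        shift (fun k => ‖v k - x‖ ^ 2), shift (fun k => ⟪v k - x, a⟫)] at hsummed
      simp only [nsmul_eq_mul] at hsummed
      linarith [hsummed]
    have hFnn : 0 ≤ F n := Finset.sum_nonneg fun k _ => sq_nonneg _
    have hGS : ⟪S n - x, a⟫ = (n : ℝ)⁻¹ * G n := by
      have h1 : S n - x = (n : ℝ)⁻¹ • ((∑ k ∈ Finset.range n, v k) - (n : ℝ) • x) := by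
        rw [hS, smul_sub, smul_smul, inv_mul_cancel₀ (ne_of_gt hnpos), one_smul]
      rw [h1, real_inner_smul_left, inner_sub_left, real_inner_smul_left]
      have h2 : G n = ⟪∑ k ∈ Finset.range n, v k, a⟫ - n * ⟪x, a⟫ := by
        rw [hG]
        simp only [inner_sub_left]
        rw [Finset.sum_sub_distrib, ← sum_inner, Finset.sum_const, Finset.card_range]
        simp [nsmul_eq_mul]
      rw [h2]
    rw [div_eq_inv_mul, hGS]
    -- bounds on the error terms
    have hb1 : (α + γ) * (‖v n - x‖ ^ 2 - ‖v 0 - x‖ ^ 2) ≥ -(|α + γ| * B) := by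
      have h1 := hvxB n
      have h2 := hvxB 0
      have h3 : |‖v n - x‖ ^ 2 - ‖v 0 - x‖ ^ 2| ≤ B := by
        rw [abs_le]; constructor <;> nlinarith [sq_nonneg ‖v n - x‖, sq_nonneg ‖v 0 - x‖]
      have := neg_abs_le ((α + γ) * (‖v n - x‖ ^ 2 - ‖v 0 - x‖ ^ 2))
      calc -(|α + γ| * B) ≤ -|((α + γ) * (‖v n - x‖ ^ 2 - ‖v 0 - x‖ ^ 2))| := by
            rw [abs_mul]; apply neg_le_neg
            exact mul_le_mul_of_nonneg_left h3 (abs_nonneg _)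
        _ ≤ _ := this
    have hb2 : 2 * α * (⟪v n - x, a⟫ - ⟪v 0 - x, a⟫) ≥ -(4 * |α| * ((M + ‖x‖) * ‖a‖)) := by
      have h1 := hga n
      have h2 := hga 0
      have h3 : |⟪v n - x, a⟫ - ⟪v 0 - x, a⟫| ≤ 2 * ((M + ‖x‖) * ‖a‖) := by
        calc |⟪v n - x, a⟫ - ⟪v 0 - x, a⟫| ≤ |⟪v n - x, a⟫| + |⟪v 0 - x, a⟫| :=
              abs_sub _ _
          _ ≤ 2 * ((M + ‖x‖) * ‖a‖) := by linarith
      have h4 := neg_abs_le (2 * α * (⟪v n - x, a⟫ - ⟪v 0 - x, a⟫))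
      calc -(4 * |α| * ((M + ‖x‖) * ‖a‖))
          ≤ -|2 * α * (⟪v n - x, a⟫ - ⟪v 0 - x, a⟫)| := by
            rw [abs_mul, abs_mul]
            apply neg_le_neg
            have : |(2:ℝ)| * |α| * |⟪v n - x, a⟫ - ⟪v 0 - x, a⟫|
                ≤ 2 * |α| * (2 * ((M + ‖x‖) * ‖a‖)) := by
              rw [abs_two]
              exact mul_le_mul_of_nonneg_left h3 (by positivity)
            calc |(2:ℝ)| * |α| * |⟪v n - x, a⟫ - ⟪v 0 - x, a⟫|
                ≤ 2 * |α| * (2 * ((M + ‖x‖) * ‖a‖)) := this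
              _ = 4 * |α| * ((M + ‖x‖) * ‖a‖) := by ring
        _ ≤ _ := h4
    -- combine: (α+β+γ+δ) F n ≥ 0
    have hcomb : 2 * (α + β) * G n + n * ((α + β) * ‖a‖ ^ 2)
        ≤ |α + γ| * B + 4 * |α| * ((M + ‖x‖) * ‖a‖) := by
      linarith [sumineq, hb1, hb2, mul_nonneg hsum hFnn]
    have hstep : 2 * (α + β) * ((n:ℝ)⁻¹ * G n) + (α + β) * ‖a‖ ^ 2
        = (n:ℝ)⁻¹ * (2 * (α + β) * G n + n * ((α + β) * ‖a‖ ^ 2)) := by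
      field_simp
    rw [hstep]
    exact mul_le_mul_of_nonneg_left hcomb (le_of_lt (inv_pos.2 hnpos))
  -- nested closed convex sets of Cesàro mean tails
  set K : ℕ → Set H := fun n => closure (convexHull ℝ (S '' Set.Ici (n+1))) with hK
  have hKne : ∀ n, (K n).Nonempty := fun n =>
    ⟨S (n+1), subset_closure (subset_convexHull ℝ _ ⟨n+1, Set.self_mem_Ici, rfl⟩)⟩
  have hKcl : ∀ n, IsClosed (K n) := fun n => isClosed_closure
  have hKcv : ∀ n, Convex ℝ (K n) := fun n => (convex_convexHull ℝ _).closure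
  have hKanti : ∀ n m, n ≤ m → K m ⊆ K n := fun n m h =>
    closure_mono (convexHull_mono (Set.image_mono (Set.Ici_subset_Ici.2 (by omega))))
  have hKbd : ∀ n, K n ⊆ Metric.closedBall 0 M := by
    intro n
    apply closure_minimal ?_ Metric.isClosed_closedBall
    apply convexHull_min ?_ (convex_closedBall 0 M)
    rintro _ ⟨m, hm, rfl⟩
    rw [Metric.mem_closedBall, dist_eq_norm, sub_zero]
    exact hSnorm m (le_trans (Nat.le_add_left 1 n) hm)
  obtain ⟨p, hp⟩ := nested_inter_nonempty K hKne hKcl hKcv hKanti M hKbd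
  refine ⟨p, fun x hx => ?_⟩
  obtain ⟨E, hE0, hE⟩ := key x hx
  have hQ : ∀ η : ℝ, 0 < η →
      2 * (α + β) * ⟪p - x, x - T x⟫ + (α + β) * ‖x - T x‖ ^ 2 ≤ η := by
    intro η hη
    obtain ⟨m, hm⟩ := exists_nat_gt (E / η)
    set Q : Set H := {y : H | 2 * (α + β) * ⟪y - x, x - T x⟫
        + (α + β) * ‖x - T x‖ ^ 2 ≤ η} with hQdef
    have hset : Q = (fun y : H => ⟪y, (2 * (α + β)) • (x - T x)⟫) ⁻¹'
        Set.Iic (η - (α + β) * ‖x - T x‖ ^ 2 + 2 * (α + β) * ⟪x, x - T x⟫) := by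
      ext y
      simp only [hQdef, Set.mem_setOf_eq, Set.mem_preimage, Set.mem_Iic,
        real_inner_smul_right, inner_sub_left]
      constructor <;> intro h <;> linarith
    have hlin : IsLinearMap ℝ (fun y : H => ⟪y, (2 * (α + β)) • (x - T x)⟫) :=
      ⟨fun u v => inner_add_left _ _ _, fun c u => real_inner_smul_left _ _ _⟩
    have hQcv : Convex ℝ Q := by
      rw [hset]; exact convex_halfSpace_le hlin _
    have hQcl : IsClosed Q := by
      rw [hset]
      exact IsClosed.preimage (Continuous.inner continuous_id continuous_const) isClosed_Iic
    have hsub : K m ⊆ Q := by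
      apply closure_minimal ?_ hQcl
      apply convexHull_min ?_ hQcv
      rintro _ ⟨k, hk, rfl⟩
      have hk1 : 1 ≤ k := le_trans (Nat.le_add_left 1 m) hk
      have h1 := hE k hk1
      have hkpos : (0:ℝ) < k := by exact_mod_cast hk1
      have hmk : (m:ℝ) < k := by exact_mod_cast lt_of_lt_of_le (Nat.lt_succ_self m) hk
      have h2 : E / k ≤ η := by
        rw [div_le_iff₀ hkpos]
        have : E / η < k := lt_of_le_of_lt (le_of_lt hm) hmk
        rw [div_lt_iff₀ hη] at this
        linarith
      exact le_trans h1 h2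
    exact hsub (Set.mem_iInter.1 hp m)
  have hple : 2 * (α + β) * ⟪p - x, x - T x⟫ + (α + β) * ‖x - T x‖ ^ 2 ≤ 0 := by
    by_contra hcon
    push_neg at hcon
    have := hQ ((2 * (α + β) * ⟪p - x, x - T x⟫ + (α + β) * ‖x - T x‖ ^ 2) / 2)
      (by linarith)
    linarith
  have h2 : 2 * ⟪p - x, x - T x⟫ + ‖x - T x‖ ^ 2 ≤ 0 := by
    nlinarith [hple, hab]
  have hexp : ‖T x - p‖ ^ 2 = ‖x - p‖ ^ 2 - 2 * ⟪x - p, x - T x⟫ + ‖x - T x‖ ^ 2 := by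
    have h3 : T x - p = (x - p) - (x - T x) := by abel
    rw [h3, norm_sub_sq_real]
  have hip : ⟪p - x, x - T x⟫ = -⟪x - p, x - T x⟫ := by
    rw [← neg_sub x p, inner_neg_left]
  nlinarith [norm_nonneg (T x - p), norm_nonneg (x - p), hexp, h2, hip]

theorem fgh_attractive_point_iff_bounded_orbit
    {H : Type*} [NormedAddCommGroup H] [InnerProductSpace ℝ H] [CompleteSpace H]
    (C : Set H) (hC : C.Nonempty) (T : H → H) (hT : ∀ x ∈ C, T x ∈ C)
    (α β γ δ ε : ℝ)
    (hsum : α + β + γ + δ ≥ 0) (hε : ε ≥ 0) (hor : α + β > 0 ∨ α + γ > 0)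
    (hfgh : ∀ x ∈ C, ∀ y ∈ C,
      α * ‖T x - T y‖ ^ 2 + β * ‖x - T y‖ ^ 2 + γ * ‖T x - y‖ ^ 2
        + δ * ‖x - y‖ ^ 2 + ε * ‖x - T x‖ ^ 2 ≤ 0) :
    ((∃ z ∈ C, Bornology.IsBounded (Set.range fun n : ℕ => T^[n] z)) →
      ∃ p : H, ∀ x ∈ C, ‖T x - p‖ ≤ ‖x - p‖)
    ∧ ((∃ p : H, ∀ x ∈ C, ‖T x - p‖ ≤ ‖x - p‖) →
      ∀ z ∈ C, Bornology.IsBounded (Set.range fun n : ℕ => T^[n] z)) := by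
  constructor
  · rintro ⟨z, hz, hbd⟩
    rcases hor with hab | hag
    · refine forward_main C T hT α β γ δ hsum hab ?_ z hz hbd
      intro x hx y hy
      have h1 := hfgh x hx y hy
      have h2 : 0 ≤ ε * ‖x - T x‖ ^ 2 := mul_nonneg hε (sq_nonneg _)
      linarith
    · refine forward_main C T hT α γ β δ (by linarith) hag ?_ z hz hbd
      intro x hx y hy
      have h1 := hfgh y hy x hx
      have h2 : 0 ≤ ε * ‖y - T y‖ ^ 2 := mul_nonneg hε (sq_nonneg _)
      rw [norm_sub_rev (T y) (T x), norm_sub_rev (y : H) (T x), norm_sub_rev (T y) x,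
        norm_sub_rev (y : H) x] at h1
      linarith
  · rintro ⟨p, hp⟩ z hz
    have hvC : ∀ n, T^[n] z ∈ C := by
      intro n; induction n with
      | zero => exact hz
      | succ n ih => rw [Function.iterate_succ_apply']; exact hT _ ih
    have hvb : ∀ n, ‖T^[n] z - p‖ ≤ ‖z - p‖ := by
      intro n; induction n with
      | zero => simp
      | succ n ih =>
        rw [Function.iterate_succ_apply']
        exact le_trans (hp _ (hvC n)) ih
    rw [isBounded_iff_forall_norm_le]
    refine ⟨‖z - p‖ + ‖p‖, ?_⟩
    rintro _ ⟨n, rfl⟩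
    have h1 := hvb n
    have h2 := norm_sub_norm_le (T^[n] z) p
    linarith [h2, h1]
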